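/- Let d ∈ ℕ, let L be a finite set of unary relation symbols, and let ψ(x,y) be a first-order formula with two free variables in the relational language consisting of one binary edge relation symbol together with the unary relation symbols of L. Then there exist ℓ, q ∈ ℕ, depending only on d and ψ, such that for every finite structure G in that language whose binary relation is the (symmetric, irreflexive) edge relation of a simple graph of maximum degree at most d, the interpreted graph I_ψ(G) — the simple graph on the universe of G with edges {u,v} for distinct u, v such that G ⊨ ψ(u,v) ∨ ψ(v,u) — is (ℓ,q)-near-covered. -/

import Mathlib

open FirstOrder

/-- Two vertices `u`, `v` of a simple graph `G` are *near-`k`-twins* if the symmetric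
difference of their open neighbourhoods has at most `k` elements. -/
def nearTwin {V : Type*} (G : SimpleGraph V) (k : ℕ) (u v : V) : Prop :=
  (symmDiff (G.neighborSet u) (G.neighborSet v)).ncard ≤ k

/-- A graph is `(k₀, p)`-near-uniform if for some `k ≤ k₀` the near-`k`-twin relation is
an equivalence relation with at most `p` equivalence classes. -/
def NearUniform {V : Type*} (G : SimpleGraph V) (k₀ p : ℕ) : Prop :=
  ∃ k ≤ k₀, Equivalence (nearTwin G k) ∧
    {C : Set V | ∃ u, C = {v | nearTwin G k u v}}.ncard ≤ p

/-- A graph is `(ℓ, q)`-near-covered if there is a set `S` of at most `q` vertices such that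
every vertex is a near-`ℓ`-twin of some element of `S`. -/
def NearCovered {V : Type*} (G : SimpleGraph V) (ℓ q : ℕ) : Prop :=
  ∃ S : Set V, S.ncard ≤ q ∧ ∀ v, ∃ s ∈ S, nearTwin G ℓ s v

/-- Relation symbols for the language of labelled graphs: the unary symbols are the
labels from `Λ` and there is a single binary (edge) relation symbol. -/
def labelRels (Λ : Type) : ℕ → Type
  | 1 => Λ
  | 2 => PUnit
  | _ => Empty

/-- The first-order relational language with one binary edge relation symbol and
unary relation symbols given by the label set `Λ`. -/
def labelledGraphLang (Λ : Type) : FirstOrder.Language :=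
  ⟨fun _ => Empty, labelRels Λ⟩

/-- The first-order structure on the vertex set of a simple graph `G` in which the binary
relation symbol is interpreted by adjacency in `G` and each unary label symbol `l` is
interpreted by the vertex set `lab l`. -/
def labelledStructure {Λ V : Type} (G : SimpleGraph V) (lab : Λ → Set V) :
    (labelledGraphLang Λ).Structure V where
  funMap {n} f _ := f.elim
  RelMap {n} :=
    match n with
    | 0 => fun r _ => r.elim
    | 1 => fun l x => x 0 ∈ lab l
    | 2 => fun _ x => G.Adj (x 0) (x 1)
    | (_ + 3) => fun r _ => r.elim

/-- The graph interpreted by the formula `ψ(x,y)` in the labelled graph `(G, lab)`: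
distinct vertices `u`, `v` are adjacent iff `ψ(u,v) ∨ ψ(v,u)` holds. -/
def interpGraph {Λ V : Type} (G : SimpleGraph V) (lab : Λ → Set V)
    (ψ : (labelledGraphLang Λ).Formula (Fin 2)) : SimpleGraph V where
  Adj u v := u ≠ v ∧
    (letI := labelledStructure G lab
     ψ.Realize ![u, v] ∨ ψ.Realize ![v, u])
  symm := by
    constructor
    intro u v h
    exact ⟨Ne.symm h.1, h.2.elim Or.inr Or.inl⟩
  loopless := by
    constructor
    intro u h
    exact h.1 rfl

namespace NCAux

variable {V : Type*} (G : SimpleGraph V)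

/-- The ball of radius `r` around `u`, defined recursively. -/
def ball : ℕ → V → Set V
  | 0, u => {u}
  | r + 1, u => ball r u ∪ {w | ∃ x ∈ ball r u, G.Adj x w}

variable {G}

lemma mem_ball_self (r : ℕ) (u : V) : u ∈ ball G r u := by
  induction r with
  | zero => exact rfl
  | succ r ih => exact Or.inl ih

lemma ball_succ_subset (r : ℕ) (u : V) : ball G r u ⊆ ball G (r + 1) u :=
  Set.subset_union_left

lemma ball_mono {r s : ℕ} (h : r ≤ s) (u : V) : ball G r u ⊆ ball G s u := by
  induction s with
  | zero => simpa [Nat.le_zero.mp h] using subset_rfl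
  | succ s ih =>
    rcases Nat.lt_or_ge r (s+1) with h' | h'
    · exact (ih (Nat.lt_succ_iff.mp h')).trans (ball_succ_subset s u)
    · have : r = s + 1 := le_antisymm h h'
      subst this; exact subset_rfl

lemma mem_ball_succ_of_adj {r : ℕ} {u x w : V} (hx : x ∈ ball G r u)
    (h : G.Adj x w) : w ∈ ball G (r + 1) u :=
  Or.inr ⟨x, hx, h⟩

lemma ball_trans {s t : ℕ} {x y u : V} (hx : x ∈ ball G s y) (hy : y ∈ ball G t u) :
    x ∈ ball G (s + t) u := by
  induction s generalizing x with
  | zero => cases hx; simpa using ball_mono (Nat.le_add_left t 0) u hy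
  | succ s ih =>
    rcases hx with hx | ⟨z, hz, hadj⟩
    · exact ball_mono (by omega) u (ih hx)
    · have : s + 1 + t = (s + t) + 1 := by omega
      rw [this]
      exact mem_ball_succ_of_adj (ih hz) hadj

lemma ball_symm {r : ℕ} {x u : V} (hx : x ∈ ball G r u) : u ∈ ball G r x := by
  induction r generalizing x with
  | zero => cases hx; exact rfl
  | succ r ih =>
    rcases hx with hx | ⟨z, hz, hadj⟩
    · exact ball_mono (by omega) x (ih hx)
    · have h1 : u ∈ ball G r z := ih hz
      have h2 : z ∈ ball G 1 x := Or.inr ⟨x, rfl, hadj.symm⟩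
      simpa [Nat.add_comm] using ball_trans h1 h2

end NCAux

namespace NCAux2
open NCAux
open scoped Classical

variable {V : Type*} {G : SimpleGraph V}

lemma ball_ncard_le [Fintype V] {d : ℕ}
    (hdeg : ∀ v : V, (G.neighborSet v).ncard ≤ d) :
    ∀ (r : ℕ) (u : V), (ball G r u).ncard ≤ (d + 1) ^ r := by
  intro r
  induction r with
  | zero => intro u; simp [ball]
  | succ r ih =>
    intro u
    have hsub : ball G (r+1) u ⊆ ⋃ x ∈ ball G r u, insert x (G.neighborSet x) := by
      rintro w (hw | ⟨x, hx, hadj⟩)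
      · exact Set.mem_biUnion hw (Set.mem_insert w _)
      · exact Set.mem_biUnion hx (Set.mem_insert_of_mem _ hadj)
    have h1 : (ball G (r+1) u).ncard ≤
        (⋃ x ∈ ball G r u, insert x (G.neighborSet x)).ncard :=
      Set.ncard_le_ncard hsub (Set.toFinite _)
    set s : Finset V := (ball G r u).toFinset with hs
    have hUeq : (⋃ x ∈ ball G r u, insert x (G.neighborSet x)) =
        ↑(s.biUnion (fun x => (insert x (G.neighborSet x)).toFinset)) := by
      ext w
      simp [hs, Set.mem_iUnion]
    have h2 : (⋃ x ∈ ball G r u, insert x (G.neighborSet x)).ncard ≤ s.card * (d+1) := by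
      rw [hUeq, Set.ncard_coe_finset]
      refine (Finset.card_biUnion_le).trans ?_
      refine (Finset.sum_le_card_nsmul s _ (d+1) ?_).trans (by simp [Nat.mul_comm])
      intro x _
      have : ((insert x (G.neighborSet x) : Set V)).ncard ≤ d + 1 := by
        refine (Set.ncard_insert_le _ _).trans ?_
        have := hdeg x
        omega
      simpa [Set.ncard_eq_toFinset_card'] using this
    have h3 : s.card ≤ (d+1)^r := by
      have := ih u
      simpa [hs, Set.ncard_eq_toFinset_card'] using this
    calc (ball G (r+1) u).ncard ≤ s.card * (d+1) := h1.trans h2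
      _ ≤ (d+1)^r * (d+1) := Nat.mul_le_mul_right _ h3
      _ = (d+1)^(r+1) := by ring

end NCAux2

namespace NCAux

variable {Λ V : Type*}

/-- A partial isomorphism between the `r`-balls of two tuples. -/
structure Sim (G : SimpleGraph V) (lab : Λ → Set V) (r : ℕ) {ι : Type*}
    (t t' : ι → V) : Type _ where
  f : V → V
  g : V → V
  hpt : ∀ i, f (t i) = t' i
  hgf : ∀ i, ∀ x ∈ ball G r (t i), g (f x) = x
  hfg : ∀ i, ∀ y ∈ ball G r (t' i), f (g y) = y
  hadj : ∀ i j x y, x ∈ ball G r (t i) → y ∈ ball G r (t j) → G.Adj x y →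
    G.Adj (f x) (f y)
  hadj' : ∀ i j x y, x ∈ ball G r (t' i) → y ∈ ball G r (t' j) → G.Adj x y →
    G.Adj (g x) (g y)
  hlab : ∀ i x, x ∈ ball G r (t i) → ∀ l, x ∈ lab l ↔ f x ∈ lab l

variable {G : SimpleGraph V} {lab : Λ → Set V} {r : ℕ} {ι : Type*} {t t' : ι → V}

private lemma ballmapAux {f : V → V} {c c' : V} (hpt : f c = c')
    (hadj : ∀ x y, x ∈ ball G r c → y ∈ ball G r c → G.Adj x y → G.Adj (f x) (f y))
    {s : ℕ} (hs : s ≤ r) : ∀ x ∈ ball G s c, f x ∈ ball G s c' := by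
  induction s with
  | zero => rintro x rfl; exact hpt ▸ rfl
  | succ s ih =>
    rintro x (hx | ⟨y, hy, hxy⟩)
    · exact ball_mono (by omega) _ (ih (by omega) x hx)
    · refine mem_ball_succ_of_adj (ih (by omega) y hy) ?_
      exact hadj y x (ball_mono (by omega) _ hy) (ball_mono hs _ (Or.inr ⟨y, hy, hxy⟩)) hxy

namespace Sim

lemma ballmap (S : Sim G lab r t t') (i : ι) {s : ℕ} (hs : s ≤ r) :
    ∀ x ∈ ball G s (t i), S.f x ∈ ball G s (t' i) :=
  ballmapAux (S.hpt i) (fun x y hx hy => S.hadj i i x y hx hy) hs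

lemma hpt' (S : Sim G lab r t t') (i : ι) : S.g (t' i) = t i := by
  have := S.hgf i (t i) (mem_ball_self r (t i))
  rwa [S.hpt i] at this

lemma ballmap' (S : Sim G lab r t t') (i : ι) {s : ℕ} (hs : s ≤ r) :
    ∀ y ∈ ball G s (t' i), S.g y ∈ ball G s (t i) :=
  ballmapAux (S.hpt' i) (fun x y hx hy => S.hadj' i i x y hx hy) hs

/-- Symmetry. -/
noncomputable def symm (S : Sim G lab r t t') : Sim G lab r t' t where
  f := S.g
  g := S.f
  hpt := S.hpt'
  hgf := S.hfg
  hfg := S.hgf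
  hadj := S.hadj'
  hadj' := S.hadj
  hlab := by
    intro i y hy l
    have hg : S.g y ∈ ball G r (t i) := S.ballmap' i le_rfl y hy
    have := S.hlab i (S.g y) hg l
    rw [S.hfg i y hy] at this
    exact this.symm

/-- Reflexivity. -/
noncomputable def refl (G : SimpleGraph V) (lab : Λ → Set V) (r : ℕ) (t : ι → V) :
    Sim G lab r t t where
  f := id
  g := id
  hpt := fun _ => rfl
  hgf := fun _ _ _ => rfl
  hfg := fun _ _ _ => rfl
  hadj := fun _ _ _ _ _ _ h => h
  hadj' := fun _ _ _ _ _ _ h => h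
  hlab := fun _ _ _ _ => Iff.rfl

/-- Transitivity. -/
noncomputable def trans {t'' : ι → V} (S : Sim G lab r t t') (T : Sim G lab r t' t'') :
    Sim G lab r t t'' where
  f := T.f ∘ S.f
  g := S.g ∘ T.g
  hpt := fun i => by simp [S.hpt i, T.hpt i]
  hgf := fun i x hx => by
    have h1 : S.f x ∈ ball G r (t' i) := S.ballmap i le_rfl x hx
    simp [T.hgf i _ h1, S.hgf i x hx]
  hfg := fun i y hy => by
    have h1 : T.g y ∈ ball G r (t' i) := T.ballmap' i le_rfl y hy
    simp [S.hfg i _ h1, T.hfg i y hy]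
  hadj := fun i j x y hx hy h => by
    exact T.hadj i j _ _ (S.ballmap i le_rfl x hx) (S.ballmap j le_rfl y hy)
      (S.hadj i j x y hx hy h)
  hadj' := fun i j x y hx hy h => by
    exact S.hadj' i j _ _ (T.ballmap' i le_rfl x hx) (T.ballmap' j le_rfl y hy)
      (T.hadj' i j x y hx hy h)
  hlab := fun i x hx l => by
    exact (S.hlab i x hx l).trans (T.hlab i _ (S.ballmap i le_rfl x hx) l)

/-- Radius monotonicity. -/
noncomputable def mono {s : ℕ} (S : Sim G lab r t t') (hs : s ≤ r) : Sim G lab s t t' where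
  f := S.f
  g := S.g
  hpt := S.hpt
  hgf := fun i x hx => S.hgf i x (ball_mono hs _ hx)
  hfg := fun i y hy => S.hfg i y (ball_mono hs _ hy)
  hadj := fun i j x y hx hy h =>
    S.hadj i j x y (ball_mono hs _ hx) (ball_mono hs _ hy) h
  hadj' := fun i j x y hx hy h =>
    S.hadj' i j x y (ball_mono hs _ hx) (ball_mono hs _ hy) h
  hlab := fun i x hx l => S.hlab i x (ball_mono hs _ hx) l

/-- Reindexing. -/
noncomputable def reindex {ι' : Type*} (S : Sim G lab r t t') (σ : ι' → ι)
    {u u' : ι' → V} (hu : ∀ j, t (σ j) = u j) (hu' : ∀ j, t' (σ j) = u' j) :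
    Sim G lab r u u' where
  f := S.f
  g := S.g
  hpt := fun j => by rw [← hu j, ← hu' j]; exact S.hpt (σ j)
  hgf := fun j x hx => S.hgf (σ j) x (by rwa [hu j])
  hfg := fun j y hy => S.hfg (σ j) y (by rwa [hu' j])
  hadj := fun i j x y hx hy h =>
    S.hadj (σ i) (σ j) x y (by rwa [hu i]) (by rwa [hu j]) h
  hadj' := fun i j x y hx hy h =>
    S.hadj' (σ i) (σ j) x y (by rwa [hu' i]) (by rwa [hu' j]) h
  hlab := fun j x hx l => S.hlab (σ j) x (by rwa [hu j]) l

/-- Shrinking to deep points. -/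
noncomputable def shrink {ι' : Type*} (S : Sim G lab r t t') {k s : ℕ}
    (hks : k + s ≤ r) (u : ι' → V) (hu : ∀ j, ∃ i, u j ∈ ball G k (t i)) :
    Sim G lab s u (S.f ∘ u) where
  f := S.f
  g := S.g
  hpt := fun _ => rfl
  hgf := fun j x hx => by
    obtain ⟨i, hi⟩ := hu j
    exact S.hgf i x (ball_mono (show s + k ≤ r by omega) _ (ball_trans hx hi))
  hfg := fun j y hy => by
    obtain ⟨i, hi⟩ := hu j
    have : S.f (u j) ∈ ball G k (t' i) := S.ballmap i (by omega) _ hi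
    exact S.hfg i y (ball_mono (show s + k ≤ r by omega) _ (ball_trans hy this))
  hadj := fun i j x y hx hy h => by
    obtain ⟨i', hi'⟩ := hu i
    obtain ⟨j', hj'⟩ := hu j
    exact S.hadj i' j' x y (ball_mono (show s + k ≤ r by omega) _ (ball_trans hx hi'))
      (ball_mono (show s + k ≤ r by omega) _ (ball_trans hy hj')) h
  hadj' := fun i j x y hx hy h => by
    obtain ⟨i', hi'⟩ := hu i
    obtain ⟨j', hj'⟩ := hu j
    have h1 : S.f (u i) ∈ ball G k (t' i') := S.ballmap i' (by omega) _ hi'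
    have h2 : S.f (u j) ∈ ball G k (t' j') := S.ballmap j' (by omega) _ hj'
    exact S.hadj' i' j' x y (ball_mono (show s + k ≤ r by omega) _ (ball_trans hx h1))
      (ball_mono (show s + k ≤ r by omega) _ (ball_trans hy h2)) h
  hlab := fun j x hx l => by
    obtain ⟨i, hi⟩ := hu j
    exact S.hlab i x (ball_mono (show s + k ≤ r by omega) _ (ball_trans hx hi)) l

end Sim

end NCAux

namespace NCAux
namespace Sim

variable {Λ V : Type*} {G : SimpleGraph V} {lab : Λ → Set V} {r : ℕ}
variable {ι₁ ι₂ : Type*} {t1 t1' : ι₁ → V} {t2 t2' : ι₂ → V}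

private lemma far_disj (hd : ∀ i j, t2 j ∉ ball G (2*r+1) (t1 i)) {i : ι₁} {x : V}
    (hx : x ∈ ball G r (t1 i)) : ¬ ∃ j, x ∈ ball G r (t2 j) := by
  rintro ⟨j, hj⟩
  exact hd i j (ball_mono (by omega) _ (ball_trans (ball_symm hj) hx))

private lemma far_cross (hd : ∀ i j, t2 j ∉ ball G (2*r+1) (t1 i)) {i : ι₁} {j : ι₂}
    {x y : V} (hx : x ∈ ball G r (t1 i)) (hy : y ∈ ball G r (t2 j))
    (h : G.Adj x y) : False := by
  refine hd i j (ball_mono (show r + (r+1) ≤ 2*r+1 by omega) _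
    (ball_trans (ball_symm hy) (mem_ball_succ_of_adj hx h)))

open scoped Classical in
/-- Disjoint union of partial isomorphisms of far-apart tuples. -/
noncomputable def union (S1 : Sim G lab r t1 t1') (S2 : Sim G lab r t2 t2')
    (hd : ∀ i j, t2 j ∉ ball G (2*r+1) (t1 i))
    (hd' : ∀ i j, t2' j ∉ ball G (2*r+1) (t1' i)) :
    Sim G lab r (Sum.elim t1 t2) (Sum.elim t1' t2') where
  f := fun x => if ∃ j, x ∈ ball G r (t2 j) then S2.f x else S1.f x
  g := fun y => if ∃ j, y ∈ ball G r (t2' j) then S2.g y else S1.g y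
  hpt := by
    rintro (i | j)
    · simp only [Sum.elim_inl]
      beta_reduce
      refine (if_neg (far_disj hd (mem_ball_self r (t1 i)))).trans ?_
      exact S1.hpt i
    · simp only [Sum.elim_inr]
      beta_reduce
      refine (if_pos (show ∃ j', t2 j ∈ ball G r (t2 j') from ⟨j, mem_ball_self r (t2 j)⟩)).trans ?_
      exact S2.hpt j
  hgf := by
    rintro (i | j) x hx
    · simp only [Sum.elim_inl] at hx
      beta_reduce
      rw [if_neg (far_disj hd hx)]
      have hfx : S1.f x ∈ ball G r (t1' i) := S1.ballmap i le_rfl x hx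
      beta_reduce
      rw [if_neg (far_disj hd' hfx)]
      exact S1.hgf i x hx
    · simp only [Sum.elim_inr] at hx
      beta_reduce
      rw [if_pos (show ∃ j, x ∈ ball G r (t2 j) from ⟨j, hx⟩)]
      have hfx : S2.f x ∈ ball G r (t2' j) := S2.ballmap j le_rfl x hx
      beta_reduce
      rw [if_pos (show ∃ j, S2.f x ∈ ball G r (t2' j) from ⟨j, hfx⟩)]
      exact S2.hgf j x hx
  hfg := by
    rintro (i | j) y hy
    · simp only [Sum.elim_inl] at hy
      beta_reduce
      rw [if_neg (far_disj hd' hy)]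
      have hgy : S1.g y ∈ ball G r (t1 i) := S1.ballmap' i le_rfl y hy
      beta_reduce
      rw [if_neg (far_disj hd hgy)]
      exact S1.hfg i y hy
    · simp only [Sum.elim_inr] at hy
      beta_reduce
      rw [if_pos (show ∃ j, y ∈ ball G r (t2' j) from ⟨j, hy⟩)]
      have hgy : S2.g y ∈ ball G r (t2 j) := S2.ballmap' j le_rfl y hy
      beta_reduce
      rw [if_pos (show ∃ j, S2.g y ∈ ball G r (t2 j) from ⟨j, hgy⟩)]
      exact S2.hfg j y hy
  hadj := by
    rintro (i | i) (j | j) x y hx hy h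
    · simp only [Sum.elim_inl] at hx hy
      beta_reduce
      rw [if_neg (far_disj hd hx), if_neg (far_disj hd hy)]
      exact S1.hadj i j x y hx hy h
    · exact (far_cross hd hx hy h).elim
    · exact (far_cross hd hy hx h.symm).elim
    · simp only [Sum.elim_inr] at hx hy
      beta_reduce
      rw [if_pos (show ∃ j, x ∈ ball G r (t2 j) from ⟨i, hx⟩), if_pos (show ∃ j, y ∈ ball G r (t2 j) from ⟨j, hy⟩)]
      exact S2.hadj i j x y hx hy h
  hadj' := by
    rintro (i | i) (j | j) x y hx hy h
    · simp only [Sum.elim_inl] at hx hy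
      beta_reduce
      rw [if_neg (far_disj hd' hx), if_neg (far_disj hd' hy)]
      exact S1.hadj' i j x y hx hy h
    · exact (far_cross hd' hx hy h).elim
    · exact (far_cross hd' hy hx h.symm).elim
    · simp only [Sum.elim_inr] at hx hy
      beta_reduce
      rw [if_pos (show ∃ j, x ∈ ball G r (t2' j) from ⟨i, hx⟩), if_pos (show ∃ j, y ∈ ball G r (t2' j) from ⟨j, hy⟩)]
      exact S2.hadj' i j x y hx hy h
  hlab := by
    rintro (i | j) x hx l
    · simp only [Sum.elim_inl] at hx
      beta_reduce
      rw [if_neg (far_disj hd hx)]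
      exact S1.hlab i x hx l
    · simp only [Sum.elim_inr] at hx
      beta_reduce
      rw [if_pos (show ∃ j, x ∈ ball G r (t2 j) from ⟨j, hx⟩)]
      exact S2.hlab j x hx l

end Sim
end NCAux

namespace NCAux

variable {Λ V : Type*} {G : SimpleGraph V} {lab : Λ → Set V}

/-- If `c` is far from the tuple `t`, there is a `c'` far from `t'` whose `e`-ball
looks like that of `c`. -/
lemma far_witness [Fintype V] {e : ℕ} {ι : Type*} {t t' : ι → V}
    (S : Sim G lab (3*e+1) t t') {c : V}
    (hc : ∀ i, c ∉ ball G (2*e+1) (t i)) :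
    ∃ c', (∀ i, c' ∉ ball G (2*e+1) (t' i)) ∧
      Nonempty (Sim G lab e (fun _ : Unit => c) (fun _ : Unit => c')) := by
  classical
  set E : Set V := {x | Nonempty (Sim G lab e (fun _ : Unit => c) (fun _ : Unit => x))}
    with hE
  set Near : Set V := {x | ∃ i, x ∈ ball G (2*e+1) (t i)} with hNear
  set Near' : Set V := {x | ∃ i, x ∈ ball G (2*e+1) (t' i)} with hNear'
  -- x near t with the same e-ball type as c maps to a near point of t' with the same type
  have hstep : ∀ x ∈ E ∩ Near, S.f x ∈ E ∩ Near' := by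
    rintro x ⟨hxE, i, hxN⟩
    have hx2 : Sim G lab e (fun _ : Unit => x) (fun _ : Unit => S.f x) := by
      have := S.shrink (k := 2*e+1) (s := e) (by omega) (fun _ : Unit => x)
        (fun _ => ⟨i, hxN⟩)
      exact this
    refine ⟨⟨hxE.some.trans hx2⟩, ⟨i, S.ballmap i (by omega) x hxN⟩⟩
  have hstep' : ∀ y ∈ E ∩ Near', S.g y ∈ E ∩ Near := by
    rintro y ⟨hyE, i, hyN⟩
    have hy2 : Sim G lab e (fun _ : Unit => y) (fun _ : Unit => S.g y) := by
      have := S.symm.shrink (k := 2*e+1) (s := e) (by omega) (fun _ : Unit => y)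
        (fun _ => ⟨i, hyN⟩)
      exact this
    refine ⟨⟨hyE.some.trans hy2⟩, ⟨i, S.ballmap' i (by omega) y hyN⟩⟩
  have hbij : Set.BijOn S.f (E ∩ Near) (E ∩ Near') := by
    refine ⟨hstep, ?_, ?_⟩
    · rintro x ⟨_, i, hxN⟩ y ⟨_, j, hyN⟩ hxy
      have h1 := S.hgf i x (ball_mono (by omega) _ hxN)
      have h2 := S.hgf j y (ball_mono (by omega) _ hyN)
      rw [← h1, ← h2, hxy]
    · rintro y hy
      refine ⟨S.g y, hstep' y hy, ?_⟩
      obtain ⟨_, i, hyN⟩ := hy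
      exact S.hfg i y (ball_mono (by omega) _ hyN)
  have hcard : (E ∩ Near).ncard = (E ∩ Near').ncard := by
    rw [← Set.ncard_image_of_injOn hbij.injOn, hbij.image_eq]
  have hsplit : (E ∩ Near).ncard + (E \ Near).ncard = E.ncard :=
    Set.ncard_inter_add_ncard_diff_eq_ncard E Near (Set.toFinite _)
  have hsplit' : (E ∩ Near').ncard + (E \ Near').ncard = E.ncard :=
    Set.ncard_inter_add_ncard_diff_eq_ncard E Near' (Set.toFinite _)
  have hdiff : (E \ Near).ncard = (E \ Near').ncard := by omega
  have hcE : c ∈ E \ Near := by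
    refine ⟨⟨Sim.refl G lab e _⟩, ?_⟩
    rintro ⟨i, hi⟩
    exact hc i hi
  have hpos : 0 < (E \ Near').ncard := by
    rw [← hdiff]
    exact (Set.ncard_pos (Set.toFinite _)).mpr ⟨c, hcE⟩
  obtain ⟨c', hc'E, hc'N⟩ := (Set.ncard_pos (Set.toFinite _)).mp hpos
  exact ⟨c', fun i hi => hc'N ⟨i, hi⟩, hc'E⟩

end NCAux

namespace NCAux
open FirstOrder FirstOrder.Language

/-- Quantifier-depth based locality radius of a formula. -/
def rad {L : Language} {α : Type*} : ∀ {n : ℕ}, L.BoundedFormula α n → ℕ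
  | _, .falsum => 0
  | _, .equal _ _ => 0
  | _, .rel _ _ => 0
  | _, .imp φ₁ φ₂ => max (rad φ₁) (rad φ₂)
  | _, .all φ => 3 * rad φ + 1

lemma term_eq_var {Λ : Type} {β : Type*} (t : (labelledGraphLang Λ).Term β) :
    ∃ i, t = Term.var i := by
  cases t with
  | var i => exact ⟨i, rfl⟩
  | func f _ => exact Empty.elim f

variable {Λ V : Type} {G : SimpleGraph V} {lab : Λ → Set V}

/-- Extending a partial isomorphism by one more point (the heart of Hanf locality):
either the new point is close to the tuple, in which case we map it through, or it is
far, in which case we find by counting a far point with the same small ball type. -/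
lemma append_sim [Fintype V] {e : ℕ} {ι : Type*} {T T' : ι → V}
    (S : Sim G lab (3*e+1) T T') (c : V) :
    ∃ c', Nonempty (Sim G lab e (Sum.elim T (fun _ : Unit => c))
      (Sum.elim T' (fun _ : Unit => c'))) := by
  by_cases hnear : ∃ i, c ∈ ball G (2*e+1) (T i)
  · refine ⟨S.f c, ⟨?_⟩⟩
    have hu : ∀ j : ι ⊕ Unit, ∃ i,
        (Sum.elim T (fun _ : Unit => c)) j ∈ ball G (2*e+1) (T i) := by
      rintro (j | _)
      · exact ⟨j, mem_ball_self _ _⟩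
      · exact hnear
    have hS := S.shrink (k := 2*e+1) (s := e) (by omega) _ hu
    refine hS.reindex id (fun j => rfl) ?_
    rintro (j | j)
    · exact S.hpt j
    · rfl
  · push_neg at hnear
    obtain ⟨c', hfar', ⟨Sc⟩⟩ := far_witness S hnear
    exact ⟨c', ⟨(S.mono (by omega)).union Sc (fun i _ => hnear i) (fun i _ => hfar' i)⟩⟩

/-- Tuples with `Sim`-isomorphic neighbourhoods satisfy the same formulas. -/
theorem sim_realize_iff [Fintype V] {α : Type} {n : ℕ}
    (φ : (labelledGraphLang Λ).BoundedFormula α n) :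
    ∀ {r : ℕ}, rad φ ≤ r → ∀ {v v' : α → V} {xs xs' : Fin n → V},
      Sim G lab r (Sum.elim v xs) (Sum.elim v' xs') →
      (@BoundedFormula.Realize _ V (labelledStructure G lab) α n φ v xs ↔
       @BoundedFormula.Realize _ V (labelledStructure G lab) α n φ v' xs') := by
  letI := labelledStructure G lab
  induction φ with
  | falsum =>
    intro r _ v v' xs xs' _
    exact Iff.rfl
  | equal t₁ t₂ =>
    intro r _ v v' xs xs' S
    obtain ⟨i₁, rfl⟩ := term_eq_var t₁
    obtain ⟨i₂, rfl⟩ := term_eq_var t₂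
    show Sum.elim v xs i₁ = Sum.elim v xs i₂ ↔ Sum.elim v' xs' i₁ = Sum.elim v' xs' i₂
    constructor
    · intro h; rw [← S.hpt i₁, ← S.hpt i₂, h]
    · intro h
      rw [← S.hpt i₁, ← S.hpt i₂] at h
      have := congrArg S.g h
      rwa [S.hgf i₁ _ (mem_ball_self r _), S.hgf i₂ _ (mem_ball_self r _)] at this
  | @rel n k R ts =>
    intro r _ v v' xs xs' S
    match k, R with
    | 1, R =>
      obtain ⟨i₀, h₀⟩ := term_eq_var (ts 0)
      show Term.realize (Sum.elim v xs) (ts 0) ∈ lab R ↔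
        Term.realize (Sum.elim v' xs') (ts 0) ∈ lab R
      rw [h₀]
      show Sum.elim v xs i₀ ∈ lab R ↔ Sum.elim v' xs' i₀ ∈ lab R
      rw [← S.hpt i₀]
      exact S.hlab i₀ _ (mem_ball_self r _) R
    | 2, R =>
      obtain ⟨i₀, h₀⟩ := term_eq_var (ts 0)
      obtain ⟨i₁, h₁⟩ := term_eq_var (ts 1)
      show G.Adj (Term.realize (Sum.elim v xs) (ts 0)) (Term.realize (Sum.elim v xs) (ts 1)) ↔
        G.Adj (Term.realize (Sum.elim v' xs') (ts 0)) (Term.realize (Sum.elim v' xs') (ts 1))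
      rw [h₀, h₁]
      show G.Adj (Sum.elim v xs i₀) (Sum.elim v xs i₁) ↔
        G.Adj (Sum.elim v' xs' i₀) (Sum.elim v' xs' i₁)
      constructor
      · intro h
        rw [← S.hpt i₀, ← S.hpt i₁]
        exact S.hadj i₀ i₁ _ _ (mem_ball_self r _) (mem_ball_self r _) h
      · intro h
        have := S.hadj' i₀ i₁ _ _ (mem_ball_self r _) (mem_ball_self r _) h
        rwa [S.hpt' i₀, S.hpt' i₁] at this
  | imp φ₁ φ₂ ih₁ ih₂ =>
    intro r hr v v' xs xs' S
    simp only [rad] at hr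
    rw [BoundedFormula.realize_imp, BoundedFormula.realize_imp]
    rw [ih₁ (le_trans (le_max_left _ _) hr) S, ih₂ (le_trans (le_max_right _ _) hr) S]
  | all φ ih =>
    intro r hr v v' xs xs' S
    simp only [rad] at hr
    set e := rad φ with he
    have hS : Sim G lab (3*e+1) (Sum.elim v xs) (Sum.elim v' xs') := S.mono (by omega)
    rw [BoundedFormula.realize_all, BoundedFormula.realize_all]
    have snocSim : ∀ {m : ℕ} {w w' : α → V} {ys ys' : Fin m → V} (c c' : V),
        Sim G lab e (Sum.elim (Sum.elim w ys) (fun _ : Unit => c))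
          (Sum.elim (Sum.elim w' ys') (fun _ : Unit => c')) →
        Sim G lab e (Sum.elim w (Fin.snoc ys c)) (Sum.elim w' (Fin.snoc ys' c')) := by
      intro m w w' ys ys' c c' Sc
      refine Sc.reindex (fun j => Sum.elim (fun a => Sum.inl (Sum.inl a))
        (fun k => Fin.lastCases (Sum.inr ()) (fun k' => Sum.inl (Sum.inr k')) k) j) ?_ ?_
      · rintro (a | k)
        · rfl
        · refine Fin.lastCases ?_ ?_ k
          · simp
          · intro k'; simp
      · rintro (a | k)
        · rfl
        · refine Fin.lastCases ?_ ?_ k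
          · simp
          · intro k'; simp
    constructor
    · intro H c'
      obtain ⟨c, ⟨Sc⟩⟩ := append_sim hS.symm c'
      exact (ih le_rfl (snocSim (w:=v) (w':=v') (ys:=xs) (ys':=xs') c c' Sc.symm)).mp (H c)
    · intro H c
      obtain ⟨c', ⟨Sc⟩⟩ := append_sim hS c
      exact (ih le_rfl (snocSim (w:=v) (w':=v') (ys:=xs) (ys':=xs') c c' Sc)).mpr (H c')

end NCAux

namespace NCAux

open scoped Classical

variable {Λ V : Type} [Fintype V]

variable (G : SimpleGraph V) (lab : Λ → Set V)

/-- Finset of the ball. -/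
noncomputable def bfin (R : ℕ) (u : V) : Finset V := (ball G R u).toFinset

noncomputable def mcard (R : ℕ) (u : V) : ℕ := (bfin G R u).card

noncomputable def eqv (R : ℕ) (u : V) : ↥(bfin G R u) ≃ Fin (mcard G R u) :=
  (bfin G R u).equivFin

noncomputable def elt (R : ℕ) (u : V) (i : Fin (mcard G R u)) : V :=
  ((eqv G R u).symm i : V)

lemma mem_bfin_self (R : ℕ) (u : V) : u ∈ bfin G R u := by
  simp [bfin, Set.mem_toFinset, mem_ball_self]

lemma elt_mem (R : ℕ) (u : V) (i : Fin (mcard G R u)) : elt G R u i ∈ ball G R u := by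
  exact Set.mem_toFinset.mp ((eqv G R u).symm i).2

noncomputable def eltN (R : ℕ) (u : V) (i : ℕ) : V :=
  if h : i < mcard G R u then elt G R u ⟨i, h⟩ else u

/-- The code of a vertex: size of its ball, adjacency matrix, label matrix,
and position of the centre, all with respect to a chosen enumeration. -/
noncomputable def code (R fcap : ℕ) (u : V) :
    Fin (fcap+1) × (Fin fcap → Fin fcap → Bool) × (Fin fcap → Λ → Bool) × Fin (fcap+1) :=
  ⟨⟨min (mcard G R u) fcap, by omega⟩,
   fun i j => decide (G.Adj (eltN G R u i) (eltN G R u j)),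
   fun i l => decide (eltN G R u i ∈ lab l),
   ⟨min ((eqv G R u) ⟨u, mem_bfin_self G R u⟩ : ℕ) fcap, by omega⟩⟩

lemma mcard_le {d : ℕ} (hdeg : ∀ v : V, (G.neighborSet v).ncard ≤ d) (R : ℕ) (u : V) :
    mcard G R u ≤ (d+1)^R := by
  have := NCAux2.ball_ncard_le (G := G) hdeg R u
  rwa [Set.ncard_eq_toFinset_card'] at this

lemma eqv_mem {R : ℕ} {u x : V} (hx : x ∈ ball G R u) : x ∈ bfin G R u := by
  exact Set.mem_toFinset.mpr hx

noncomputable def idxOf (R : ℕ) (u x : V) (hx : x ∈ ball G R u) : Fin (mcard G R u) :=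
  eqv G R u ⟨x, eqv_mem G hx⟩

lemma elt_idxOf {R : ℕ} {u x : V} (hx : x ∈ ball G R u) :
    elt G R u (idxOf G R u x hx) = x := by
  rw [elt, idxOf, Equiv.symm_apply_apply]

lemma eltN_idxOf {R : ℕ} {u x : V} (hx : x ∈ ball G R u) :
    eltN G R u (idxOf G R u x hx : ℕ) = x := by
  rw [eltN, dif_pos (idxOf G R u x hx).isLt, Fin.eta]
  exact elt_idxOf G hx

lemma idxOf_elt {R : ℕ} {u : V} (i : Fin (mcard G R u)) :
    idxOf G R u (elt G R u i) (elt_mem G R u i) = i := by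
  have h : (⟨elt G R u i, eqv_mem G (elt_mem G R u i)⟩ : ↥(bfin G R u)) =
      (eqv G R u).symm i := Subtype.ext rfl
  rw [idxOf, h, Equiv.apply_symm_apply]

lemma eltN_mem {R : ℕ} {u : V} {a : ℕ} (ha : a < mcard G R u) :
    eltN G R u a ∈ ball G R u := by
  rw [eltN, dif_pos ha]; exact elt_mem G R u ⟨a, ha⟩

lemma idxOf_eltN {R : ℕ} {u : V} {a : ℕ} (ha : a < mcard G R u) :
    (idxOf G R u (eltN G R u a) (eltN_mem G ha) : ℕ) = a := by
  have h : eltN G R u a = elt G R u ⟨a, ha⟩ := by rw [eltN, dif_pos ha]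
  have h2 : idxOf G R u (eltN G R u a) (eltN_mem G ha) = ⟨a, ha⟩ := by
    have := idxOf_elt G (u := u) (R := R) ⟨a, ha⟩
    rw [idxOf] at this ⊢
    convert this using 3
  rw [h2]

/-- Building a `Sim` from matching codes. -/
noncomputable def simOfData {R : ℕ} {u v : V}
    (hm : mcard G R u = mcard G R v)
    (hb : (idxOf G R u u (mem_ball_self R u) : ℕ) = (idxOf G R v v (mem_ball_self R v) : ℕ))
    (hAN : ∀ a b : ℕ, a < mcard G R u → b < mcard G R u →
      (G.Adj (eltN G R u a) (eltN G R u b) ↔ G.Adj (eltN G R v a) (eltN G R v b)))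
    (hBN : ∀ a : ℕ, a < mcard G R u → ∀ l,
      (eltN G R u a ∈ lab l ↔ eltN G R v a ∈ lab l)) :
    Sim G lab R (fun _ : Unit => u) (fun _ : Unit => v) where
  f := fun x => if hx : x ∈ ball G R u then eltN G R v (idxOf G R u x hx : ℕ) else x
  g := fun y => if hy : y ∈ ball G R v then eltN G R u (idxOf G R v y hy : ℕ) else y
  hpt := by
    intro _
    beta_reduce
    rw [dif_pos (mem_ball_self R u), hb, eltN_idxOf G (mem_ball_self R v)]
  hgf := by
    intro _ x hx
    beta_reduce
    rw [dif_pos hx]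
    have hlt : (idxOf G R u x hx : ℕ) < mcard G R v := hm ▸ (idxOf G R u x hx).isLt
    rw [dif_pos (eltN_mem G hlt), idxOf_eltN G hlt, eltN_idxOf G hx]
  hfg := by
    intro _ y hy
    beta_reduce
    rw [dif_pos hy]
    have hlt : (idxOf G R v y hy : ℕ) < mcard G R u := hm.symm ▸ (idxOf G R v y hy).isLt
    rw [dif_pos (eltN_mem G hlt), idxOf_eltN G hlt, eltN_idxOf G hy]
  hadj := by
    intro _ _ x y hx hy hxy
    beta_reduce
    rw [dif_pos hx, dif_pos hy]
    refine (hAN _ _ (idxOf G R u x hx).isLt (idxOf G R u y hy).isLt).mp ?_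
    rwa [eltN_idxOf G hx, eltN_idxOf G hy]
  hadj' := by
    intro _ _ x y hx hy hxy
    beta_reduce
    rw [dif_pos hx, dif_pos hy]
    have hltx : (idxOf G R v x hx : ℕ) < mcard G R u := hm.symm ▸ (idxOf G R v x hx).isLt
    have hlty : (idxOf G R v y hy : ℕ) < mcard G R u := hm.symm ▸ (idxOf G R v y hy).isLt
    refine (hAN _ _ hltx hlty).mpr ?_
    rwa [eltN_idxOf G hx, eltN_idxOf G hy]
  hlab := by
    intro _ x hx l
    beta_reduce
    rw [dif_pos hx]
    have := hBN _ (idxOf G R u x hx).isLt l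
    rwa [eltN_idxOf G hx] at this

lemma code_eq_sim {R fcap : ℕ} {u v : V}
    (hu : mcard G R u ≤ fcap) (hv : mcard G R v ≤ fcap)
    (hcode : code G lab R fcap u = code G lab R fcap v) :
    Nonempty (Sim G lab R (fun _ : Unit => u) (fun _ : Unit => v)) := by
  have hm : mcard G R u = mcard G R v := by
    have h := congrArg (fun z => (z.1 : ℕ)) hcode
    simp only [code] at h
    omega
  have hb : (idxOf G R u u (mem_ball_self R u) : ℕ)
      = (idxOf G R v v (mem_ball_self R v) : ℕ) := by
    have h := congrArg (fun z => (z.2.2.2 : ℕ)) hcode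
    simp only [code] at h
    have h1 : (idxOf G R u u (mem_ball_self R u) : ℕ) < mcard G R u :=
      (idxOf G R u u (mem_ball_self R u)).isLt
    have h2 : (idxOf G R v v (mem_ball_self R v) : ℕ) < mcard G R v :=
      (idxOf G R v v (mem_ball_self R v)).isLt
    have e1 : (idxOf G R u u (mem_ball_self R u) : ℕ)
        = ((eqv G R u) ⟨u, mem_bfin_self G R u⟩ : ℕ) := rfl
    have e2 : (idxOf G R v v (mem_ball_self R v) : ℕ)
        = ((eqv G R v) ⟨v, mem_bfin_self G R v⟩ : ℕ) := rfl
    rw [e1, e2]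
    omega
  have hAN : ∀ a b : ℕ, a < mcard G R u → b < mcard G R u →
      (G.Adj (eltN G R u a) (eltN G R u b) ↔ G.Adj (eltN G R v a) (eltN G R v b)) := by
    intro a b ha hb'
    have h := congrArg (fun z => z.2.1 (⟨a, by omega⟩ : Fin fcap) (⟨b, by omega⟩ : Fin fcap))
      hcode
    simp only [code] at h
    exact decide_eq_decide.mp h
  have hBN : ∀ a : ℕ, a < mcard G R u → ∀ l,
      (eltN G R u a ∈ lab l ↔ eltN G R v a ∈ lab l) := by
    intro a ha l
    have h := congrArg (fun z => z.2.2.1 (⟨a, by omega⟩ : Fin fcap) l) hcode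
    simp only [code] at h
    exact decide_eq_decide.mp h
  exact ⟨simOfData G lab hm hb hAN hBN⟩

end NCAux

namespace NCAux

open FirstOrder FirstOrder.Language

variable {Λ V : Type} [Fintype V] {G : SimpleGraph V} {lab : Λ → Set V}

/-- Transfer of interpreted adjacency along a ball isomorphism, for far third points. -/
lemma interp_adj_transfer (ψ : (labelledGraphLang Λ).Formula (Fin 2)) {u v w : V}
    (Su : Sim G lab (rad ψ) (fun _ : Unit => u) (fun _ : Unit => v))
    (hw1 : w ∉ ball G (2 * rad ψ + 1) u) (hw2 : w ∉ ball G (2 * rad ψ + 1) v) :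
    ((interpGraph G lab ψ).Adj u w ↔ (interpGraph G lab ψ).Adj v w) := by
  set R := rad ψ with hR
  have Spair : Sim G lab R (Sum.elim (fun _ : Unit => u) (fun _ : Unit => w))
      (Sum.elim (fun _ : Unit => v) (fun _ : Unit => w)) := by
    refine Su.union (Sim.refl G lab R _) ?_ ?_
    · intro _ _; exact hw1
    · intro _ _; exact hw2
  have S1 : Sim G lab R (Sum.elim ![u, w] (default : Fin 0 → V))
      (Sum.elim ![v, w] (default : Fin 0 → V)) := by
    refine Spair.reindex
      (Sum.elim (fun i : Fin 2 => if i = 0 then Sum.inl () else Sum.inr ()) Fin.elim0)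
      ?_ ?_
    · rintro (i | j)
      · fin_cases i <;> simp
      · exact j.elim0
    · rintro (i | j)
      · fin_cases i <;> simp
      · exact j.elim0
  have S2 : Sim G lab R (Sum.elim ![w, u] (default : Fin 0 → V))
      (Sum.elim ![w, v] (default : Fin 0 → V)) := by
    refine Spair.reindex
      (Sum.elim (fun i : Fin 2 => if i = 0 then Sum.inr () else Sum.inl ()) Fin.elim0)
      ?_ ?_
    · rintro (i | j)
      · fin_cases i <;> simp
      · exact j.elim0
    · rintro (i | j)
      · fin_cases i <;> simp
      · exact j.elim0
  have h1 := sim_realize_iff (G := G) (lab := lab) ψ le_rfl S1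
  have h2 := sim_realize_iff (G := G) (lab := lab) ψ le_rfl S2
  have hne1 : u ≠ w := fun h => hw1 (h ▸ mem_ball_self _ _)
  have hne2 : v ≠ w := fun h => hw2 (h ▸ mem_ball_self _ _)
  show (u ≠ w ∧ _) ↔ (v ≠ w ∧ _)
  constructor
  · rintro ⟨-, h⟩
    exact ⟨hne2, h.imp h1.mp h2.mp⟩
  · rintro ⟨-, h⟩
    exact ⟨hne1, h.imp h1.mpr h2.mpr⟩

lemma sim_nearTwin {d : ℕ} (hdeg : ∀ x : V, (G.neighborSet x).ncard ≤ d)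
    (ψ : (labelledGraphLang Λ).Formula (Fin 2)) {u v : V}
    (Su : Sim G lab (rad ψ) (fun _ : Unit => u) (fun _ : Unit => v)) :
    nearTwin (interpGraph G lab ψ) (2 * (d+1)^(2 * rad ψ + 1)) u v := by
  set R := rad ψ with hR
  have hsub : symmDiff ((interpGraph G lab ψ).neighborSet u)
      ((interpGraph G lab ψ).neighborSet v) ⊆
      ball G (2*R+1) u ∪ ball G (2*R+1) v := by
    intro w hw
    by_contra hcon
    have hc1 : w ∉ ball G (2*R+1) u := fun h => hcon (Or.inl h)
    have hc2 : w ∉ ball G (2*R+1) v := fun h => hcon (Or.inr h)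
    have hiff := interp_adj_transfer ψ Su hc1 hc2
    rw [Set.mem_symmDiff] at hw
    rcases hw with ⟨h1, h2⟩ | ⟨h1, h2⟩
    · exact h2 (hiff.mp h1)
    · exact h2 (hiff.mpr h1)
  unfold nearTwin
  calc (symmDiff ((interpGraph G lab ψ).neighborSet u)
      ((interpGraph G lab ψ).neighborSet v)).ncard
      ≤ (ball G (2*R+1) u ∪ ball G (2*R+1) v).ncard :=
        Set.ncard_le_ncard hsub (Set.toFinite _)
    _ ≤ (ball G (2*R+1) u).ncard + (ball G (2*R+1) v).ncard := Set.ncard_union_le _ _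
    _ ≤ (d+1)^(2*R+1) + (d+1)^(2*R+1) :=
        Nat.add_le_add (NCAux2.ball_ncard_le hdeg _ u) (NCAux2.ball_ncard_le hdeg _ v)
    _ = 2 * (d+1)^(2*R+1) := by ring

end NCAux

theorem stmt13 (d : ℕ) (Λ : Type) [Finite Λ]
    (ψ : (labelledGraphLang Λ).Formula (Fin 2)) :
    ∃ ℓ q : ℕ, ∀ (V : Type) [Fintype V] (G : SimpleGraph V) (lab : Λ → Set V),
      (∀ v : V, (G.neighborSet v).ncard ≤ d) →
      NearCovered (interpGraph G lab ψ) ℓ q := by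

  classical
  refine ⟨2 * (d+1)^(2 * NCAux.rad ψ + 1),
    Nat.card (Fin ((d+1)^(NCAux.rad ψ)+1) ×
      (Fin ((d+1)^(NCAux.rad ψ)) → Fin ((d+1)^(NCAux.rad ψ)) → Bool) ×
      (Fin ((d+1)^(NCAux.rad ψ)) → Λ → Bool) × Fin ((d+1)^(NCAux.rad ψ)+1)), ?_⟩
  intro V _ G lab hdeg
  set R := NCAux.rad ψ with hR
  set fcap := (d+1)^R with hfcap
  set cf : V → _ := NCAux.code G lab R fcap with hcf
  set D := {c : Fin (fcap+1) × (Fin fcap → Fin fcap → Bool) ×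
      (Fin fcap → Λ → Bool) × Fin (fcap+1) // ∃ u : V, cf u = c} with hD
  set pick : D → V := fun c => c.2.choose with hpick
  refine ⟨Set.range pick, ?_, ?_⟩
  · calc (Set.range pick).ncard = (pick '' Set.univ).ncard := by rw [Set.image_univ]
      _ ≤ (Set.univ : Set D).ncard := Set.ncard_image_le (Set.toFinite _)
      _ = Nat.card D := Set.ncard_univ _
      _ ≤ _ := Nat.card_le_card_of_injective Subtype.val Subtype.val_injective
  · intro v
    refine ⟨pick ⟨cf v, ⟨v, rfl⟩⟩, ⟨⟨cf v, ⟨v, rfl⟩⟩, rfl⟩, ?_⟩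
    have hspec : cf (pick ⟨cf v, ⟨v, rfl⟩⟩) = cf v :=
      (⟨v, rfl⟩ : ∃ u : V, cf u = cf v).choose_spec
    obtain ⟨Su⟩ := NCAux.code_eq_sim G lab
      (NCAux.mcard_le G hdeg R _) (NCAux.mcard_le G hdeg R _) hspec
    exact NCAux.sim_nearTwin hdeg ψ Su
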